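/- For convex bodies A and B in ℝ^d, the function t ↦ vol((1−t)A + tB)^{1/d} is concave on [0,1] (the Brunn–Minkowski inequality in the form vol(A+B)^{1/d} ≥ vol(A)^{1/d} + vol(B)^{1/d}). -/

import Mathlib

open MeasureTheory Pointwise Set
open scoped ENNReal NNReal

lemma bm1_compact {K L : Set ℝ} (hK : K.Nonempty) (hKc : IsCompact K)
    (hL : L.Nonempty) (hLc : IsCompact L) :
    volume K + volume L ≤ volume (K + L) := by
  set a := sSup K with ha
  set b := sInf L with hb
  have haK : a ∈ K := hKc.sSup_mem hK
  have hbL : b ∈ L := hLc.sInf_mem hL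
  have h1 : (fun x => x + b) '' K ⊆ K + L := fun x ⟨k, hk, hkx⟩ => ⟨k, hk, b, hbL, hkx⟩
  have h2 : (fun y => y + a) '' L ⊆ K + L := fun y ⟨l, hl, hly⟩ =>
    ⟨a, haK, l, hl, by rw [← hly]; ring⟩
  have hmeas : volume ((fun x => x + b) '' K) = volume K := by
    have : (fun x => x + b) '' K = (fun x => x + (-b)) ⁻¹' K := by
      ext x
      constructor
      · rintro ⟨k, hk, rfl⟩; simpa
      · intro h; exact ⟨x + -b, h, by ring⟩
    rw [this, measure_preimage_add_right]
  have hmeas2 : volume ((fun y => y + a) '' L) = volume L := by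
    have : (fun y => y + a) '' L = (fun y => y + (-a)) ⁻¹' L := by
      ext y
      constructor
      · rintro ⟨l, hl, rfl⟩; simpa
      · intro h; exact ⟨y + -a, h, by ring⟩
    rw [this, measure_preimage_add_right]
  have hinter : ((fun x => x + b) '' K) ∩ ((fun y => y + a) '' L) ⊆ {a + b} := by
    rintro x ⟨⟨k, hk, rfl⟩, ⟨l, hl, hlx⟩⟩
    have h1 : k ≤ a := le_csSup hKc.bddAbove hk
    have h2 : b ≤ l := csInf_le hLc.bddBelow hl
    have : l + a = k + b := hlx
    have : k = a ∧ l = b := by constructor <;> linarith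
    simp [this.1]
  calc volume K + volume L
      = volume ((fun x => x + b) '' K) + volume ((fun y => y + a) '' L) := by
        rw [hmeas, hmeas2]
    _ = volume (((fun x => x + b) '' K) ∪ ((fun y => y + a) '' L)) +
        volume (((fun x => x + b) '' K) ∩ ((fun y => y + a) '' L)) := by
        exact (measure_union_add_inter _ ((hLc.image (continuous_id.add continuous_const)).measurableSet)).symm
    _ ≤ volume (K + L) + 0 := by
        refine add_le_add (measure_mono (union_subset h1 h2)) (le_trans (measure_mono hinter) (by simp))
    _ = volume (K + L) := by simp

lemma vol_smul (c : ℝ) (S : Set ℝ) (hc : 0 ≤ c) :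
    volume (c • S) = ENNReal.ofReal c * volume S := by
  rw [Measure.addHaar_smul]
  congr
  rw [Module.finrank_self, pow_one, abs_of_nonneg hc]

lemma bm1_compact_scaled {c d : ℝ} (hc : 0 < c) (hd : 0 < d) {K L : Set ℝ}
    (hK : K.Nonempty) (hKc : IsCompact K) (hL : L.Nonempty) (hLc : IsCompact L) :
    ENNReal.ofReal c * volume K + ENNReal.ofReal d * volume L ≤ volume (c • K + d • L) := by
  rw [← vol_smul c K hc.le, ← vol_smul d L hd.le]
  exact bm1_compact (hK.smul_set) (hKc.smul c) (hL.smul_set) (hLc.smul d)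

lemma bm1_meas {c d : ℝ} (hc : 0 < c) (hd : 0 < d) {S T : Set ℝ}
    (hS : S.Nonempty) (hSm : MeasurableSet S) (hSf : volume S ≠ ⊤)
    (hT : T.Nonempty) (hTm : MeasurableSet T) (hTf : volume T ≠ ⊤) :
    ENNReal.ofReal c * volume S + ENNReal.ofReal d * volume T ≤ volume (c • S + d • T) := by
  refine ENNReal.le_of_forall_pos_le_add fun ε hε hfin => ?_
  obtain ⟨x, hx⟩ := hS
  obtain ⟨y, hy⟩ := hT
  have hε2 : (ENNReal.ofReal (c + d))⁻¹ * (ε / 2) ≠ 0 := by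
    apply mul_ne_zero
    · simp [ENNReal.inv_ne_zero]
    · simp [hε.ne', ENNReal.div_eq_zero_iff]
  obtain ⟨K, hKS, hKc, hKvol⟩ := hSm.exists_isCompact_lt_add hSf (ε := (ENNReal.ofReal (c + d))⁻¹ * (ε / 2)) hε2
  obtain ⟨L, hLT, hLc, hLvol⟩ := hTm.exists_isCompact_lt_add hTf (ε := (ENNReal.ofReal (c + d))⁻¹ * (ε / 2)) hε2
  set K' : Set ℝ := K ∪ {x}
  set L' : Set ℝ := L ∪ {y}
  have hK'c : IsCompact K' := hKc.union isCompact_singleton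
  have hL'c : IsCompact L' := hLc.union isCompact_singleton
  have hK'S : K' ⊆ S := union_subset hKS (by simpa)
  have hL'T : L' ⊆ T := union_subset hLT (by simpa)
  have key := bm1_compact_scaled hc hd (⟨x, by simp [K']⟩ : K'.Nonempty) hK'c
    (⟨y, by simp [L']⟩ : L'.Nonempty) hL'c
  have hsub : c • K' + d • L' ⊆ c • S + d • T := by
    gcongr <;> assumption
  have hcd0 : (0:ℝ) < c + d := by linarith
  have hcd : ENNReal.ofReal (c+d) ≠ 0 := by simp [ENNReal.ofReal_eq_zero, not_le, hcd0]
  have hcd' : ENNReal.ofReal (c+d) ≠ ⊤ := by simp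
  calc ENNReal.ofReal c * volume S + ENNReal.ofReal d * volume T
      ≤ ENNReal.ofReal c * (volume K' + (ENNReal.ofReal (c + d))⁻¹ * (ε / 2))
        + ENNReal.ofReal d * (volume L' + (ENNReal.ofReal (c + d))⁻¹ * (ε / 2)) := by
        gcongr
        · exact hKvol.le.trans (add_le_add_left (measure_mono subset_union_left) _)
        · exact hLvol.le.trans (add_le_add_left (measure_mono subset_union_left) _)
    _ = (ENNReal.ofReal c * volume K' + ENNReal.ofReal d * volume L')
        + (ENNReal.ofReal c + ENNReal.ofReal d) * ((ENNReal.ofReal (c + d))⁻¹ * (ε / 2)) := by ring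
    _ ≤ volume (c • S + d • T) + (ENNReal.ofReal (c + d)) * ((ENNReal.ofReal (c + d))⁻¹ * (ε / 2)) := by
        gcongr
        · exact le_trans key (measure_mono hsub)
        · rw [← ENNReal.ofReal_add hc.le hd.le]
    _ = volume (c • S + d • T) + ε / 2 := by
        rw [← mul_assoc, ENNReal.mul_inv_cancel hcd hcd', one_mul]
    _ ≤ volume (c • S + d • T) + ε := by gcongr; exact ENNReal.half_le_self

lemma pl1_norm {t : ℝ} (ht0 : 0 < t) (ht1 : t < 1) {f g h : ℝ → ℝ}
    (hf : Measurable f) (hg : Measurable g) (hh : Measurable h)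
    (hf0 : ∀ x, 0 ≤ f x) (hg0 : ∀ x, 0 ≤ g x) (hh0 : ∀ x, 0 ≤ h x)
    (hf1 : ∀ x, f x ≤ 1) (hg1 : ∀ x, g x ≤ 1)
    (hfs : ∀ s, s < 1 → ∃ x, s < f x) (hgs : ∀ s, s < 1 → ∃ y, s < g y)
    (hfint : ∫⁻ x, ENNReal.ofReal (f x) ≠ ⊤) (hgint : ∫⁻ x, ENNReal.ofReal (g x) ≠ ⊤)
    (hyp : ∀ x y, f x ^ (1-t) * g y ^ t ≤ h ((1-t)*x + t*y)) :
    ENNReal.ofReal (1-t) * (∫⁻ x, ENNReal.ofReal (f x))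
      + ENNReal.ofReal t * (∫⁻ x, ENNReal.ofReal (g x))
      ≤ ∫⁻ x, ENNReal.ofReal (h x) := by
  have h1t : 0 < 1 - t := by linarith
  set F : ℝ → ℝ≥0∞ := fun s => volume {a | s < f a} with hF
  set G : ℝ → ℝ≥0∞ := fun s => volume {a | s < g a} with hG
  have hFmeas : Measurable F := by
    apply Antitone.measurable
    intro s₁ s₂ hle
    exact measure_mono fun a ha => lt_of_le_of_lt hle ha
  have hGmeas : Measurable G := by
    apply Antitone.measurable
    intro s₁ s₂ hle
    exact measure_mono fun a ha => lt_of_le_of_lt hle ha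
  -- Markov finiteness
  have hFfin : ∀ s : ℝ, 0 < s → F s ≠ ⊤ := by
    intro s hs
    have markov : ENNReal.ofReal s * volume {a | ENNReal.ofReal s ≤ ENNReal.ofReal (f a)}
        ≤ ∫⁻ x, ENNReal.ofReal (f x) :=
      mul_meas_ge_le_lintegral₀ (hf.ennreal_ofReal.aemeasurable) _
    have hsub : {a | s < f a} ⊆ {a | ENNReal.ofReal s ≤ ENNReal.ofReal (f a)} :=
      fun a ha => ENNReal.ofReal_le_ofReal (le_of_lt ha)
    intro htop
    have : ENNReal.ofReal s * F s ≤ ∫⁻ x, ENNReal.ofReal (f x) :=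
      le_trans (mul_le_mul_right (measure_mono hsub) _) markov
    rw [htop, ENNReal.mul_top (by simp [ENNReal.ofReal_eq_zero, not_le, hs])] at this
    exact hfint (top_le_iff.mp this)
  have hGfin : ∀ s : ℝ, 0 < s → G s ≠ ⊤ := by
    intro s hs
    have markov : ENNReal.ofReal s * volume {a | ENNReal.ofReal s ≤ ENNReal.ofReal (g a)}
        ≤ ∫⁻ x, ENNReal.ofReal (g x) :=
      mul_meas_ge_le_lintegral₀ (hg.ennreal_ofReal.aemeasurable) _
    have hsub : {a | s < g a} ⊆ {a | ENNReal.ofReal s ≤ ENNReal.ofReal (g a)} :=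
      fun a ha => ENNReal.ofReal_le_ofReal (le_of_lt ha)
    intro htop
    have : ENNReal.ofReal s * G s ≤ ∫⁻ x, ENNReal.ofReal (g x) :=
      le_trans (mul_le_mul_right (measure_mono hsub) _) markov
    rw [htop, ENNReal.mul_top (by simp [ENNReal.ofReal_eq_zero, not_le, hs])] at this
    exact hgint (top_le_iff.mp this)
  -- the key pointwise inequality on (0,1)
  have key : ∀ s ∈ Set.Ioo (0:ℝ) 1,
      ENNReal.ofReal (1-t) * F s + ENNReal.ofReal t * G s ≤ volume {a | s ≤ h a} := by
    intro s ⟨hs0, hs1⟩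
    obtain ⟨x₀, hx₀⟩ := hfs s hs1
    obtain ⟨y₀, hy₀⟩ := hgs s hs1
    have hSm : MeasurableSet {a | s < f a} := measurableSet_lt measurable_const hf
    have hTm : MeasurableSet {a | s < g a} := measurableSet_lt measurable_const hg
    have hincl : (1-t) • {a | s < f a} + t • {a | s < g a} ⊆ {a | s ≤ h a} := by
      rintro z ⟨x', ⟨x, hx, rfl⟩, y', ⟨y, hy, rfl⟩, rfl⟩
      have h1 : s ^ (1-t) < f x ^ (1-t) :=
        Real.rpow_lt_rpow hs0.le hx h1t
      have h2 : s ^ t < g y ^ t := Real.rpow_lt_rpow hs0.le hy ht0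
      have h3 : s ^ (1-t) * s ^ t = s := by
        rw [← Real.rpow_add hs0]; simp
      have h4 : s < f x ^ (1-t) * g y ^ t := by
        calc s = s ^ (1-t) * s ^ t := h3.symm
        _ < f x ^ (1-t) * g y ^ t :=
          mul_lt_mul'' h1 h2 (Real.rpow_nonneg hs0.le _) (Real.rpow_nonneg hs0.le _)
      exact le_of_lt (lt_of_lt_of_le h4 (hyp x y))
    calc ENNReal.ofReal (1-t) * F s + ENNReal.ofReal t * G s
        ≤ volume ((1-t) • {a | s < f a} + t • {a | s < g a}) :=
          bm1_meas h1t ht0 ⟨x₀, hx₀⟩ hSm (hFfin s hs0) ⟨y₀, hy₀⟩ hTm (hGfin s hs0)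
      _ ≤ volume {a | s ≤ h a} := measure_mono hincl
  -- integral truncation: ∫ over Ioi 0 equals ∫ over Ioo 0 1 for F and G
  have htrunc : ∀ (F' : ℝ → ℝ≥0∞) (hub : ∀ s : ℝ, 1 ≤ s → F' s = 0),
      ∫⁻ s in Set.Ioi (0:ℝ), F' s = ∫⁻ s in Set.Ioo (0:ℝ) 1, F' s := by
    intro F' hub
    rw [← Set.Ioo_union_Ici_eq_Ioi (by norm_num : (0:ℝ) < 1),
      lintegral_union measurableSet_Ici (by
        rw [Set.disjoint_left]; rintro a ⟨_, ha1⟩ ha2; exact absurd (Set.mem_Ici.mp ha2) (not_le.mpr ha1))]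
    have : ∫⁻ s in Set.Ici (1:ℝ), F' s = 0 := by
      rw [setLIntegral_congr_fun measurableSet_Ici (fun s hs => hub s hs)]
      simp
    rw [this, add_zero]
  have hFtop : ∀ s : ℝ, 1 ≤ s → F s = 0 := by
    intro s hs
    have : {a | s < f a} = (∅ : Set ℝ) := by
      ext a; simp only [Set.mem_setOf_eq, Set.mem_empty_iff_false, iff_false, not_lt]
      exact le_trans (hf1 a) hs
    simp [hF, this]
  have hGtop : ∀ s : ℝ, 1 ≤ s → G s = 0 := by
    intro s hs
    have : {a | s < g a} = (∅ : Set ℝ) := by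
      ext a; simp only [Set.mem_setOf_eq, Set.mem_empty_iff_false, iff_false, not_lt]
      exact le_trans (hg1 a) hs
    simp [hG, this]
  -- layer cake
  have lcf : ∫⁻ x, ENNReal.ofReal (f x) = ∫⁻ s in Set.Ioi (0:ℝ), F s :=
    lintegral_eq_lintegral_meas_lt volume (ae_of_all _ hf0) hf.aemeasurable
  have lcg : ∫⁻ x, ENNReal.ofReal (g x) = ∫⁻ s in Set.Ioi (0:ℝ), G s :=
    lintegral_eq_lintegral_meas_lt volume (ae_of_all _ hg0) hg.aemeasurable
  have lch : ∫⁻ x, ENNReal.ofReal (h x) = ∫⁻ s in Set.Ioi (0:ℝ), volume {a | s ≤ h a} :=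
    lintegral_eq_lintegral_meas_le volume (ae_of_all _ hh0) hh.aemeasurable
  calc ENNReal.ofReal (1-t) * (∫⁻ x, ENNReal.ofReal (f x))
        + ENNReal.ofReal t * (∫⁻ x, ENNReal.ofReal (g x))
      = ENNReal.ofReal (1-t) * (∫⁻ s in Set.Ioo (0:ℝ) 1, F s)
        + ENNReal.ofReal t * (∫⁻ s in Set.Ioo (0:ℝ) 1, G s) := by
        rw [lcf, lcg, htrunc F hFtop, htrunc G hGtop]
    _ = ∫⁻ s in Set.Ioo (0:ℝ) 1, (ENNReal.ofReal (1-t) * F s + ENNReal.ofReal t * G s) := by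
        rw [lintegral_add_left (hFmeas.const_mul _), lintegral_const_mul _ hFmeas,
          lintegral_const_mul _ hGmeas]
    _ ≤ ∫⁻ s in Set.Ioo (0:ℝ) 1, volume {a | s ≤ h a} := by
        refine lintegral_mono_ae ((ae_restrict_iff' measurableSet_Ioo).2 (ae_of_all _ key))
    _ ≤ ∫⁻ s in Set.Ioi (0:ℝ), volume {a | s ≤ h a} :=
        lintegral_mono' (Measure.restrict_mono Set.Ioo_subset_Ioi_self le_rfl) le_rfl
    _ = ∫⁻ x, ENNReal.ofReal (h x) := lch.symm

/-- weighted AM-GM in ℝ≥0∞ for finite arguments -/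
lemma ennreal_amgm {t : ℝ} (ht0 : 0 < t) (ht1 : t < 1) {a b : ℝ≥0∞} (ha : a ≠ ⊤) (hb : b ≠ ⊤) :
    a ^ (1-t) * b ^ t ≤ ENNReal.ofReal (1-t) * a + ENNReal.ofReal t * b := by
  lift a to ℝ≥0 using ha
  lift b to ℝ≥0 using hb
  have h1t : (0:ℝ) ≤ 1 - t := by linarith
  rw [← ENNReal.coe_rpow_of_nonneg _ h1t, ← ENNReal.coe_rpow_of_nonneg _ ht0.le]
  rw [ENNReal.ofReal, ENNReal.ofReal, ← ENNReal.coe_mul, ← ENNReal.coe_mul, ← ENNReal.coe_mul,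
    ← ENNReal.coe_add, ENNReal.coe_le_coe]
  have := NNReal.geom_mean_le_arith_mean2_weighted (w₁ := (1-t).toNNReal) (w₂ := t.toNNReal)
    (p₁ := a) (p₂ := b) ?_
  · convert this using 3
    · rw [Real.coe_toNNReal _ h1t]
    · rw [Real.coe_toNNReal _ ht0.le]
  · rw [← Real.toNNReal_add h1t ht0.le]; norm_num

lemma pl1 {t : ℝ} (ht0 : 0 < t) (ht1 : t < 1) {f g h : ℝ → ℝ}
    (hf : Measurable f) (hg : Measurable g) (hh : Measurable h)
    (hf0 : ∀ x, 0 ≤ f x) (hg0 : ∀ x, 0 ≤ g x) (hh0 : ∀ x, 0 ≤ h x)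
    (hfb : BddAbove (Set.range f)) (hgb : BddAbove (Set.range g))
    (hfint : ∫⁻ x, ENNReal.ofReal (f x) ≠ ⊤) (hgint : ∫⁻ x, ENNReal.ofReal (g x) ≠ ⊤)
    (hyp : ∀ x y, f x ^ (1-t) * g y ^ t ≤ h ((1-t)*x + t*y)) :
    (∫⁻ x, ENNReal.ofReal (f x)) ^ (1-t) * (∫⁻ x, ENNReal.ofReal (g x)) ^ t
      ≤ ∫⁻ x, ENNReal.ofReal (h x) := by
  have h1t : 0 < 1 - t := by linarith
  by_cases hIf : (∫⁻ x, ENNReal.ofReal (f x)) = 0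
  · rw [hIf, ENNReal.zero_rpow_of_pos h1t, zero_mul]; exact zero_le
  by_cases hIg : (∫⁻ x, ENNReal.ofReal (g x)) = 0
  · rw [hIg, ENNReal.zero_rpow_of_pos ht0, mul_zero]; exact zero_le
  -- suprema
  set Mf := ⨆ x, f x with hMf
  set Mg := ⨆ x, g x with hMg
  have hfle : ∀ x, f x ≤ Mf := fun x => le_ciSup hfb x
  have hgle : ∀ x, g x ≤ Mg := fun x => le_ciSup hgb x
  have hMfpos : 0 < Mf := by
    by_contra hcon
    push_neg at hcon
    apply hIf
    have : ∀ x, ENNReal.ofReal (f x) = 0 := fun x => by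
      simp [ENNReal.ofReal_eq_zero]; exact le_trans (hfle x) hcon
    simp [this]
  have hMgpos : 0 < Mg := by
    by_contra hcon
    push_neg at hcon
    apply hIg
    have : ∀ x, ENNReal.ofReal (g x) = 0 := fun x => by
      simp [ENNReal.ofReal_eq_zero]; exact le_trans (hgle x) hcon
    simp [this]
  -- normalized functions
  set f₀ : ℝ → ℝ := fun x => f x / Mf with hf₀
  set g₀ : ℝ → ℝ := fun x => g x / Mg with hg₀
  set c : ℝ := Mf ^ (1-t) * Mg ^ t with hc
  have hcpos : 0 < c := mul_pos (Real.rpow_pos_of_pos hMfpos _) (Real.rpow_pos_of_pos hMgpos _)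
  set h₀ : ℝ → ℝ := fun x => h x / c with hh₀
  have hyp₀ : ∀ x y, f₀ x ^ (1-t) * g₀ y ^ t ≤ h₀ ((1-t)*x + t*y) := by
    intro x y
    rw [hf₀, hg₀, hh₀]
    simp only
    rw [Real.div_rpow (hf0 x) hMfpos.le, Real.div_rpow (hg0 y) hMgpos.le, div_mul_div_comm,
      div_le_div_iff_of_pos_right hcpos]
    exact hyp x y
  -- integral identities
  have intf : (∫⁻ x, ENNReal.ofReal (f x)) = ENNReal.ofReal Mf * ∫⁻ x, ENNReal.ofReal (f₀ x) := by
    rw [← lintegral_const_mul _ (by exact (hf.div_const Mf).ennreal_ofReal)]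
    congr 1; funext x
    rw [← ENNReal.ofReal_mul hMfpos.le, hf₀]
    congr 1
    field_simp
  have intg : (∫⁻ x, ENNReal.ofReal (g x)) = ENNReal.ofReal Mg * ∫⁻ x, ENNReal.ofReal (g₀ x) := by
    rw [← lintegral_const_mul _ (by exact (hg.div_const Mg).ennreal_ofReal)]
    congr 1; funext x
    rw [← ENNReal.ofReal_mul hMgpos.le, hg₀]
    congr 1
    field_simp
  have inth : (∫⁻ x, ENNReal.ofReal (h x)) = ENNReal.ofReal c * ∫⁻ x, ENNReal.ofReal (h₀ x) := by
    rw [← lintegral_const_mul _ (by exact (hh.div_const c).ennreal_ofReal)]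
    congr 1; funext x
    rw [← ENNReal.ofReal_mul hcpos.le, hh₀]
    congr 1
    field_simp
  have hf₀int : ∫⁻ x, ENNReal.ofReal (f₀ x) ≠ ⊤ := by
    intro htop
    rw [intf, htop, ENNReal.mul_top (by simp [ENNReal.ofReal_eq_zero, not_le, hMfpos])] at hfint
    exact hfint rfl
  have hg₀int : ∫⁻ x, ENNReal.ofReal (g₀ x) ≠ ⊤ := by
    intro htop
    rw [intg, htop, ENNReal.mul_top (by simp [ENNReal.ofReal_eq_zero, not_le, hMgpos])] at hgint
    exact hgint rfl
  have key := pl1_norm ht0 ht1 (hf.div_const Mf) (hg.div_const Mg) (hh.div_const c)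
    (fun x => div_nonneg (hf0 x) hMfpos.le) (fun x => div_nonneg (hg0 x) hMgpos.le)
    (fun x => div_nonneg (hh0 x) hcpos.le)
    (fun x => div_le_one_of_le₀ (hfle x) hMfpos.le)
    (fun x => div_le_one_of_le₀ (hgle x) hMgpos.le)
    (fun s hs => by
      obtain ⟨x, hx⟩ := exists_lt_of_lt_ciSup (show s * Mf < Mf by nlinarith)
      exact ⟨x, by rwa [lt_div_iff₀ hMfpos]⟩)
    (fun s hs => by
      obtain ⟨x, hx⟩ := exists_lt_of_lt_ciSup (show s * Mg < Mg by nlinarith)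
      exact ⟨x, by rwa [lt_div_iff₀ hMgpos]⟩)
    hf₀int hg₀int hyp₀
  have amgm := ennreal_amgm ht0 ht1 hf₀int hg₀int
  calc (∫⁻ x, ENNReal.ofReal (f x)) ^ (1-t) * (∫⁻ x, ENNReal.ofReal (g x)) ^ t
      = (ENNReal.ofReal Mf) ^ (1-t) * (ENNReal.ofReal Mg) ^ t *
        ((∫⁻ x, ENNReal.ofReal (f₀ x)) ^ (1-t) * (∫⁻ x, ENNReal.ofReal (g₀ x)) ^ t) := by
        rw [intf, intg, ENNReal.mul_rpow_of_nonneg _ _ h1t.le, ENNReal.mul_rpow_of_nonneg _ _ ht0.le]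
        ring
    _ = ENNReal.ofReal c *
        ((∫⁻ x, ENNReal.ofReal (f₀ x)) ^ (1-t) * (∫⁻ x, ENNReal.ofReal (g₀ x)) ^ t) := by
        rw [hc, ENNReal.ofReal_mul (Real.rpow_nonneg hMfpos.le _),
          ENNReal.ofReal_rpow_of_pos hMfpos, ENNReal.ofReal_rpow_of_pos hMgpos]
    _ ≤ ENNReal.ofReal c * (∫⁻ x, ENNReal.ofReal (h₀ x)) := by
        gcongr
        exact le_trans amgm key
    _ = ∫⁻ x, ENNReal.ofReal (h x) := inth.symm

variable (E : Type*) [MeasureSpace E] [TopologicalSpace E] [AddCommGroup E] [Module ℝ E]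

def BMtype : Prop :=
  ∀ t : ℝ, 0 < t → t < 1 → ∀ A B : Set E, A.Nonempty → IsCompact A → Convex ℝ A →
    B.Nonempty → IsCompact B → Convex ℝ B →
    volume A ^ (1-t) * volume B ^ t ≤ volume ((1-t) • A + t • B)

lemma bm_step (n : ℕ) (ih : BMtype (Fin n → ℝ)) : BMtype (ℝ × (Fin n → ℝ)) := by
  intro t ht0 ht1 A B hA hAc hAconv hB hBc hBconv
  have h1t : 0 < 1 - t := by linarith
  set C : Set (ℝ × (Fin n → ℝ)) := (1-t) • A + t • B with hC
  have hCc : IsCompact C := (hAc.smul ((1:ℝ)-t)).add (hBc.smul t)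
  have hAm : MeasurableSet A := hAc.isClosed.measurableSet
  have hBm : MeasurableSet B := hBc.isClosed.measurableSet
  have hCm : MeasurableSet C := hCc.isClosed.measurableSet
  -- slice volumes
  set F : ℝ → ℝ≥0∞ := fun x => volume (Prod.mk x ⁻¹' A) with hFdef
  set G : ℝ → ℝ≥0∞ := fun x => volume (Prod.mk x ⁻¹' B) with hGdef
  set H : ℝ → ℝ≥0∞ := fun x => volume (Prod.mk x ⁻¹' C) with hHdef
  have volA : volume A = ∫⁻ x, F x := by
    rw [Measure.volume_eq_prod, Measure.prod_apply hAm]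
  have volB : volume B = ∫⁻ x, G x := by
    rw [Measure.volume_eq_prod, Measure.prod_apply hBm]
  have volC : volume C = ∫⁻ x, H x := by
    rw [Measure.volume_eq_prod, Measure.prod_apply hCm]
  -- finiteness of slices
  have slice_sub : ∀ (D : Set (ℝ × (Fin n → ℝ))) (x : ℝ), Prod.mk x ⁻¹' D ⊆ Prod.snd '' D :=
    fun D x u hu => ⟨(x, u), hu, rfl⟩
  have hFfin : ∀ x, F x ≠ ⊤ := fun x =>
    (lt_of_le_of_lt (measure_mono (slice_sub A x))
      (hAc.image continuous_snd).measure_lt_top).ne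
  have hGfin : ∀ x, G x ≠ ⊤ := fun x =>
    (lt_of_le_of_lt (measure_mono (slice_sub B x))
      (hBc.image continuous_snd).measure_lt_top).ne
  have hHfin : ∀ x, H x ≠ ⊤ := fun x =>
    (lt_of_le_of_lt (measure_mono (slice_sub C x))
      (hCc.image continuous_snd).measure_lt_top).ne
  -- real-valued slice functions
  set f : ℝ → ℝ := fun x => (F x).toReal with hfdef
  set g : ℝ → ℝ := fun x => (G x).toReal with hgdef
  set h : ℝ → ℝ := fun x => (H x).toReal with hhdef
  have hfmeas : Measurable f := (measurable_measure_prodMk_left hAm).ennreal_toReal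
  have hgmeas : Measurable g := (measurable_measure_prodMk_left hBm).ennreal_toReal
  have hhmeas : Measurable h := (measurable_measure_prodMk_left hCm).ennreal_toReal
  have hofF : ∀ x, ENNReal.ofReal (f x) = F x := fun x => ENNReal.ofReal_toReal (hFfin x)
  have hofG : ∀ x, ENNReal.ofReal (g x) = G x := fun x => ENNReal.ofReal_toReal (hGfin x)
  have hofH : ∀ x, ENNReal.ofReal (h x) = H x := fun x => ENNReal.ofReal_toReal (hHfin x)
  have hfb : BddAbove (Set.range f) := by
    refine ⟨(volume (Prod.snd '' A)).toReal, ?_⟩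
    rintro _ ⟨x, rfl⟩
    exact ENNReal.toReal_mono (hAc.image continuous_snd).measure_lt_top.ne
      (measure_mono (slice_sub A x))
  have hgb : BddAbove (Set.range g) := by
    refine ⟨(volume (Prod.snd '' B)).toReal, ?_⟩
    rintro _ ⟨x, rfl⟩
    exact ENNReal.toReal_mono (hBc.image continuous_snd).measure_lt_top.ne
      (measure_mono (slice_sub B x))
  have hfint : ∫⁻ x, ENNReal.ofReal (f x) ≠ ⊤ := by
    simp only [hofF]
    rw [← volA]; exact hAc.measure_lt_top.ne
  have hgint : ∫⁻ x, ENNReal.ofReal (g x) ≠ ⊤ := by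
    simp only [hofG]
    rw [← volB]; exact hBc.measure_lt_top.ne
  -- key hypothesis
  have hyp : ∀ x y, f x ^ (1-t) * g y ^ t ≤ h ((1-t)*x + t*y) := by
    intro x y
    by_cases hAx : (Prod.mk x ⁻¹' A).Nonempty
    · by_cases hBy : (Prod.mk y ⁻¹' B).Nonempty
      · -- both slices nonempty: use induction hypothesis
        have hAxc : IsCompact (Prod.mk x ⁻¹' A) := by
          have : Prod.mk x ⁻¹' A = Prod.snd '' (A ∩ (Prod.fst ⁻¹' {x})) := by
            ext u
            constructor
            · intro hu; exact ⟨(x, u), ⟨hu, rfl⟩, rfl⟩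
            · rintro ⟨⟨x', u'⟩, ⟨hu', hx'⟩, rfl⟩
              simp only [Set.mem_preimage, Set.mem_singleton_iff] at hx'
              subst hx'; exact hu'
          rw [this]
          exact ((hAc.inter_right ((isClosed_singleton).preimage continuous_fst)).image
            continuous_snd)
        have hByc : IsCompact (Prod.mk y ⁻¹' B) := by
          have : Prod.mk y ⁻¹' B = Prod.snd '' (B ∩ (Prod.fst ⁻¹' {y})) := by
            ext u
            constructor
            · intro hu; exact ⟨(y, u), ⟨hu, rfl⟩, rfl⟩
            · rintro ⟨⟨x', u'⟩, ⟨hu', hx'⟩, rfl⟩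
              simp only [Set.mem_preimage, Set.mem_singleton_iff] at hx'
              subst hx'; exact hu'
          rw [this]
          exact ((hBc.inter_right ((isClosed_singleton).preimage continuous_fst)).image
            continuous_snd)
        have hAxconv : Convex ℝ (Prod.mk x ⁻¹' A) := by
          intro u hu v hv a b ha hb hab
          have := hAconv hu hv ha hb hab
          have hx' : a * x + b * x = x := by linear_combination x * hab
          have heq : a • ((x, u) : ℝ × (Fin n → ℝ)) + b • (x, v) = (x, a • u + b • v) :=
            Prod.ext_iff.mpr ⟨by simpa [smul_eq_mul] using hx', rfl⟩
          rwa [Set.mem_preimage, ← heq]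
        have hByconv : Convex ℝ (Prod.mk y ⁻¹' B) := by
          intro u hu v hv a b ha hb hab
          have := hBconv hu hv ha hb hab
          have hy' : a * y + b * y = y := by linear_combination y * hab
          have heq : a • ((y, u) : ℝ × (Fin n → ℝ)) + b • (y, v) = (y, a • u + b • v) :=
            Prod.ext_iff.mpr ⟨by simpa [smul_eq_mul] using hy', rfl⟩
          rwa [Set.mem_preimage, ← heq]
        have step := ih t ht0 ht1 _ _ hAx hAxc hAxconv hBy hByc hByconv
        have hincl : (1-t) • (Prod.mk x ⁻¹' A) + t • (Prod.mk y ⁻¹' B)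
            ⊆ Prod.mk ((1-t)*x + t*y) ⁻¹' C := by
          rintro w ⟨u', ⟨u, hu, rfl⟩, v', ⟨v, hv, rfl⟩, rfl⟩
          have hmem : (1-t) • ((x, u) : ℝ × (Fin n → ℝ)) + t • (y, v) ∈ C :=
            Set.add_mem_add (Set.smul_mem_smul_set hu) (Set.smul_mem_smul_set hv)
          exact hmem
        have key : F x ^ (1-t) * G y ^ t ≤ H ((1-t)*x + t*y) :=
          le_trans step (measure_mono hincl)
        have := ENNReal.toReal_mono (hHfin _) key
        rw [ENNReal.toReal_mul, ← ENNReal.toReal_rpow, ← ENNReal.toReal_rpow] at this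
        exact this
      · -- B slice empty
        have : G y = 0 := by
          rw [Set.not_nonempty_iff_eq_empty] at hBy
          simp [hGdef, hBy]
        have hg0 : g y = 0 := by simp [hgdef, this]
        rw [hg0, Real.zero_rpow (ne_of_gt ht0), mul_zero]
        exact ENNReal.toReal_nonneg
    · -- A slice empty
      have : F x = 0 := by
        rw [Set.not_nonempty_iff_eq_empty] at hAx
        simp [hFdef, hAx]
      have hf0 : f x = 0 := by simp [hfdef, this]
      rw [hf0, Real.zero_rpow (ne_of_gt h1t), zero_mul]
      exact ENNReal.toReal_nonneg
  have final := pl1 ht0 ht1 hfmeas hgmeas hhmeas (fun x => ENNReal.toReal_nonneg)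
    (fun x => ENNReal.toReal_nonneg) (fun x => ENNReal.toReal_nonneg) hfb hgb hfint hgint hyp
  simp only [hofF, hofG, hofH] at final
  rw [volA, volB, volC]
  exact final


lemma bm_zero : BMtype (Fin 0 → ℝ) := by
  intro t ht0 ht1 A B hA hAc hAconv hB hBc hBconv
  have hone : ∀ (S : Set (Fin 0 → ℝ)), S.Nonempty → S = Set.univ := fun S hS =>
    hS.elim fun s hs => Set.eq_univ_of_forall fun z => (Subsingleton.elim s z) ▸ hs
  have hC : ((1-t) • A + t • B).Nonempty := by
    obtain ⟨a, ha⟩ := hA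
    obtain ⟨b, hb⟩ := hB
    exact ⟨_, Set.add_mem_add (Set.smul_mem_smul_set ha) (Set.smul_mem_smul_set hb)⟩
  rw [hone _ hC, hone _ hA, hone _ hB]
  have huniv : volume (Set.univ : Set (Fin 0 → ℝ)) = 1 := by
    rw [MeasureTheory.volume_pi, Measure.pi_univ]
    simp
  rw [huniv]
  simp

lemma bm_transfer {X Y : Type*} [MeasureSpace X] [TopologicalSpace X] [AddCommGroup X]
    [Module ℝ X] [T2Space X] [OpensMeasurableSpace X] [ContinuousAdd X] [ContinuousConstSMul ℝ X]
    [MeasureSpace Y] [TopologicalSpace Y] [AddCommGroup Y] [Module ℝ Y] [T2Space Y]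
    [OpensMeasurableSpace Y]
    (e : X ≃ᵐ Y) (hmp : MeasurePreserving e volume volume)
    (hadd : ∀ a b : X, e (a + b) = e a + e b) (hsmul : ∀ (c : ℝ) (a : X), e (c • a) = c • e a)
    (hcont : Continuous e) (hbm : BMtype Y) : BMtype X := by
  intro t ht0 ht1 A B hA hAc hAconv hB hBc hBconv
  have himg_vol : ∀ S : Set X, MeasurableSet S → volume (e '' S) = volume S := by
    intro S hS
    rw [show e '' S = e.symm ⁻¹' S from (e.toEquiv.image_eq_preimage_symm S)]
    exact (hmp.symm e).measure_preimage hS.nullMeasurableSet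
  have himg_add : ∀ S T : Set X, e '' (S + T) = e '' S + e '' T := by
    intro S T
    ext y
    constructor
    · rintro ⟨x, ⟨s, hs, u, hu, rfl⟩, rfl⟩
      exact ⟨e s, Set.mem_image_of_mem e hs, e u, Set.mem_image_of_mem e hu, (hadd s u).symm⟩
    · rintro ⟨_, ⟨s, hs, rfl⟩, _, ⟨u, hu, rfl⟩, rfl⟩
      exact ⟨s + u, ⟨s, hs, u, hu, rfl⟩, hadd s u⟩
  have himg_smul : ∀ (c : ℝ) (S : Set X), e '' (c • S) = c • (e '' S) := by
    intro c S
    ext y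
    constructor
    · rintro ⟨_, ⟨s, hs, rfl⟩, rfl⟩
      exact ⟨e s, Set.mem_image_of_mem e hs, (hsmul c s).symm⟩
    · rintro ⟨_, ⟨s, hs, rfl⟩, rfl⟩
      exact ⟨c • s, ⟨s, hs, rfl⟩, hsmul c s⟩
  have hlin : IsLinearMap ℝ e := ⟨hadd, hsmul⟩
  have key := hbm t ht0 ht1 (e '' A) (e '' B) (hA.image e) (hAc.image hcont)
    (hAconv.is_linear_image hlin) (hB.image e) (hBc.image hcont) (hBconv.is_linear_image hlin)
  have hAm : MeasurableSet A := hAc.isClosed.measurableSet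
  have hBm : MeasurableSet B := hBc.isClosed.measurableSet
  have hCm : MeasurableSet ((1-t) • A + t • B) :=
    ((hAc.smul ((1:ℝ)-t)).add (hBc.smul t)).isClosed.measurableSet
  rw [himg_vol A hAm, himg_vol B hBm] at key
  calc volume A ^ (1-t) * volume B ^ t
      ≤ volume ((1-t) • (e '' A) + t • (e '' B)) := key
    _ = volume (e '' ((1-t) • A + t • B)) := by rw [himg_add, himg_smul, himg_smul]
    _ = volume ((1-t) • A + t • B) := himg_vol _ hCm

lemma bm_fin : ∀ n, BMtype (Fin n → ℝ) := by
  intro n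
  induction n with
  | zero => exact bm_zero
  | succ n ih =>
      refine bm_transfer (MeasurableEquiv.piFinSuccAbove (fun _ : Fin (n+1) => ℝ) 0)
        (volume_preserving_piFinSuccAbove (fun _ : Fin (n+1) => ℝ) 0)
        (fun a b => rfl) (fun c a => rfl) ?_ (bm_step n ih)
      show Continuous fun f : Fin (n+1) → ℝ =>
        ((f 0, fun j => f (Fin.succAbove 0 j)) : ℝ × (Fin n → ℝ))
      exact (continuous_apply 0).prodMk (continuous_pi fun j => continuous_apply _)

lemma bm_eucl (d : ℕ) : BMtype (EuclideanSpace ℝ (Fin d)) :=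
  bm_transfer (MeasurableEquiv.toLp 2 (Fin d → ℝ)).symm
    (EuclideanSpace.volume_preserving_symm_measurableEquiv_toLp (Fin d)) (fun a b => rfl) (fun c a => rfl)
    (PiLp.continuousLinearEquiv 2 ℝ (fun _ : Fin d => ℝ)).continuous (bm_fin d)


lemma eucl_vol_smul (d : ℕ) (c : ℝ) (S : Set (EuclideanSpace ℝ (Fin d))) :
    volume (c • S) = ENNReal.ofReal (|c ^ d|) * volume S := by
  rw [Measure.addHaar_smul, finrank_euclideanSpace_fin]

lemma rpow_pow_d (d : ℕ) (hd : 0 < d) {s : ℝ} (hs : 0 ≤ s) : (s ^ d) ^ ((1:ℝ)/d) = s := by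
  rw [← Real.rpow_natCast s d, ← Real.rpow_mul hs]
  rw [show (d : ℝ) * ((1:ℝ)/d) = 1 by field_simp, Real.rpow_one]

lemma bm_add (d : ℕ) (hd : 0 < d) {A B : Set (EuclideanSpace ℝ (Fin d))}
    (hA : A.Nonempty) (hAc : IsCompact A) (hAconv : Convex ℝ A)
    (hB : B.Nonempty) (hBc : IsCompact B) (hBconv : Convex ℝ B) :
    (volume A).toReal ^ ((1 : ℝ) / d) + (volume B).toReal ^ ((1 : ℝ) / d) ≤
      (volume (A + B)).toReal ^ ((1 : ℝ) / d) := by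
  have hdr : (0:ℝ) < d := Nat.cast_pos.mpr hd
  have hABfin : volume (A + B) ≠ ⊤ := (hAc.add hBc).measure_lt_top.ne
  have hAfin : volume A ≠ ⊤ := hAc.measure_lt_top.ne
  have hBfin : volume B ≠ ⊤ := hBc.measure_lt_top.ne
  have hmono : ∀ {u v : ℝ≥0∞}, u ≤ v → v ≠ ⊤ → u.toReal ^ ((1:ℝ)/d) ≤ v.toReal ^ ((1:ℝ)/d) :=
    fun {u v} huv hv => Real.rpow_le_rpow ENNReal.toReal_nonneg (ENNReal.toReal_mono hv huv)
      (by positivity)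
  -- translation invariance helpers
  have trans_le_A : volume B ≤ volume (A + B) := by
    obtain ⟨a, ha⟩ := hA
    have h1 : (fun x => a + x) ⁻¹' (A + B) ⊇ B := fun b hb => ⟨a, ha, b, hb, rfl⟩
    calc volume B ≤ volume ((fun x => a + x) ⁻¹' (A + B)) := measure_mono h1
      _ = volume (A + B) := measure_preimage_add _ _ _
  have trans_le_B : volume A ≤ volume (A + B) := by
    obtain ⟨b, hb⟩ := hB
    have h1 : (fun x => b + x) ⁻¹' (A + B) ⊇ A := fun a ha => ⟨a, ha, b, hb, add_comm a b⟩
    calc volume A ≤ volume ((fun x => b + x) ⁻¹' (A + B)) := measure_mono h1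
      _ = volume (A + B) := measure_preimage_add _ _ _
  by_cases hvA : volume A = 0
  · rw [hvA]
    simp only [ENNReal.toReal_zero]
    rw [Real.zero_rpow (by positivity), zero_add]
    exact hmono trans_le_A hABfin
  by_cases hvB : volume B = 0
  · rw [hvB]
    simp only [ENNReal.toReal_zero]
    rw [Real.zero_rpow (by positivity), add_zero]
    exact hmono trans_le_B hABfin
  -- main case
  set a : ℝ := (volume A).toReal with hadef
  set b : ℝ := (volume B).toReal with hbdef
  have hapos : 0 < a := ENNReal.toReal_pos hvA hAfin
  have hbpos : 0 < b := ENNReal.toReal_pos hvB hBfin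
  set α : ℝ := a ^ ((1:ℝ)/d) with hαdef
  set β : ℝ := b ^ ((1:ℝ)/d) with hβdef
  have hαpos : 0 < α := Real.rpow_pos_of_pos hapos _
  have hβpos : 0 < β := Real.rpow_pos_of_pos hbpos _
  set s : ℝ := α + β with hsdef
  have hspos : 0 < s := by positivity
  have hαd : α ^ d = a := by
    rw [hαdef, ← Real.rpow_natCast (a ^ ((1:ℝ)/d)) d, ← Real.rpow_mul hapos.le,
      show (1:ℝ)/d * d = 1 by field_simp, Real.rpow_one]
  have hβd : β ^ d = b := by
    rw [hβdef, ← Real.rpow_natCast (b ^ ((1:ℝ)/d)) d, ← Real.rpow_mul hbpos.le,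
      show (1:ℝ)/d * d = 1 by field_simp, Real.rpow_one]
  set t : ℝ := β / s with htdef
  have ht0 : 0 < t := by positivity
  have ht1 : t < 1 := by
    rw [htdef, div_lt_one hspos]; linarith
  have h1t : 1 - t = α / s := by
    rw [htdef]; field_simp; rw [hsdef]; ring
  -- normalized bodies
  set A₁ : Set (EuclideanSpace ℝ (Fin d)) := α⁻¹ • A with hA₁
  set B₁ : Set (EuclideanSpace ℝ (Fin d)) := β⁻¹ • B with hB₁
  have hvolA₁ : volume A₁ = 1 := by
    rw [hA₁, eucl_vol_smul, ← ENNReal.ofReal_toReal hAfin, ← hadef,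
      ← ENNReal.ofReal_mul (abs_nonneg _)]
    rw [show |α⁻¹ ^ d| * a = 1 by
      rw [inv_pow, abs_of_nonneg (by positivity), hαd]; field_simp]
    exact ENNReal.ofReal_one
  have hvolB₁ : volume B₁ = 1 := by
    rw [hB₁, eucl_vol_smul, ← ENNReal.ofReal_toReal hBfin, ← hbdef,
      ← ENNReal.ofReal_mul (abs_nonneg _)]
    rw [show |β⁻¹ ^ d| * b = 1 by
      rw [inv_pow, abs_of_nonneg (by positivity), hβd]; field_simp]
    exact ENNReal.ofReal_one
  have key := bm_eucl d t ht0 ht1 A₁ B₁ (hA.smul_set) (hAc.smul α⁻¹) (hAconv.smul α⁻¹)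
    (hB.smul_set) (hBc.smul β⁻¹) (hBconv.smul β⁻¹)
  rw [hvolA₁, hvolB₁] at key
  simp only [ENNReal.one_rpow, one_mul] at key
  have hseteq : (1-t) • A₁ + t • B₁ = s⁻¹ • (A + B) := by
    rw [hA₁, hB₁, smul_smul, smul_smul, h1t, htdef,
      show α / s * α⁻¹ = s⁻¹ by field_simp,
      show β / s * β⁻¹ = s⁻¹ by field_simp, ← smul_add]
  rw [hseteq, eucl_vol_smul] at key
  have hscalar : |(s⁻¹) ^ d| = (s ^ d)⁻¹ := by
    rw [inv_pow, abs_of_nonneg (by positivity)]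
  rw [hscalar] at key
  -- deduce ofReal (s^d) ≤ volume (A+B)
  have hsd : ENNReal.ofReal (s ^ d) ≤ volume (A + B) := by
    have h2 := mul_le_mul_right key (ENNReal.ofReal (s ^ d))
    rw [mul_one, ← mul_assoc, ← ENNReal.ofReal_mul (by positivity),
      mul_inv_cancel₀ (by positivity : s ^ d ≠ 0), ENNReal.ofReal_one, one_mul] at h2
    exact h2
  have hfinalr : s ^ d ≤ (volume (A + B)).toReal := by
    have := ENNReal.toReal_mono hABfin hsd
    rwa [ENNReal.toReal_ofReal (by positivity)] at this
  calc (volume A).toReal ^ ((1:ℝ)/d) + (volume B).toReal ^ ((1:ℝ)/d) = s := rfl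
    _ = (s ^ d) ^ ((1:ℝ)/d) := (rpow_pow_d d hd hspos.le).symm
    _ ≤ (volume (A+B)).toReal ^ ((1:ℝ)/d) :=
        Real.rpow_le_rpow (by positivity) hfinalr (by positivity)

-- helper: scaled body volume in toReal-rpow form
lemma smul_body_rpow (d : ℕ) (hd : 0 < d) (p : ℝ) (hp : 0 ≤ p)
    (C : Set (EuclideanSpace ℝ (Fin d))) (hCfin : volume C ≠ ⊤) :
    (volume (p • C)).toReal ^ ((1:ℝ)/d) = p * (volume C).toReal ^ ((1:ℝ)/d) := by
  rw [eucl_vol_smul, ENNReal.toReal_mul, ENNReal.toReal_ofReal (abs_nonneg _),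
    abs_of_nonneg (by positivity), Real.mul_rpow (by positivity) ENNReal.toReal_nonneg,
    rpow_pow_d d hd hp]

theorem stmt7 (d : ℕ) (hd : 0 < d) (A B : Set (EuclideanSpace ℝ (Fin d)))
    (hA : A.Nonempty) (hAc : IsCompact A) (hAconv : Convex ℝ A)
    (hB : B.Nonempty) (hBc : IsCompact B) (hBconv : Convex ℝ B) :
    ConcaveOn ℝ (Set.Icc (0 : ℝ) 1)
      (fun t => (volume ((1 - t) • A + t • B)).toReal ^ ((1 : ℝ) / d)) ∧
    (volume A).toReal ^ ((1 : ℝ) / d) + (volume B).toReal ^ ((1 : ℝ) / d) ≤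
      (volume (A + B)).toReal ^ ((1 : ℝ) / d) := by
  constructor
  · refine ⟨convex_Icc 0 1, ?_⟩
    intro x hx y hy p q hp hq hpq
    simp only [smul_eq_mul]
    -- the bodies
    set Cx : Set (EuclideanSpace ℝ (Fin d)) := (1 - x) • A + x • B with hCx
    set Cy : Set (EuclideanSpace ℝ (Fin d)) := (1 - y) • A + y • B with hCy
    rcases eq_or_lt_of_le hp with hp0 | hppos
    · -- p = 0, q = 1
      have hq1 : q = 1 := by linarith
      rw [← hp0, hq1]
      simp
      exact le_rfl
    rcases eq_or_lt_of_le hq with hq0 | hqpos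
    · have hp1 : p = 1 := by linarith
      rw [← hq0, hp1]
      simp
      exact le_rfl
    -- main case
    obtain ⟨hx0, hx1⟩ := hx
    obtain ⟨hy0, hy1⟩ := hy
    have hCxc : IsCompact Cx := (hAc.smul ((1:ℝ)-x)).add (hBc.smul x)
    have hCyc : IsCompact Cy := (hAc.smul ((1:ℝ)-y)).add (hBc.smul y)
    have hCxn : Cx.Nonempty := (hA.smul_set).add (hB.smul_set)
    have hCyn : Cy.Nonempty := (hA.smul_set).add (hB.smul_set)
    have hCxconv : Convex ℝ Cx := (hAconv.smul _).add (hBconv.smul _)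
    have hCyconv : Convex ℝ Cy := (hAconv.smul _).add (hBconv.smul _)
    have hseteq : (1 - (p*x + q*y)) • A + (p*x + q*y) • B = p • Cx + q • Cy := by
      rw [hCx, hCy, smul_add, smul_add, smul_smul, smul_smul, smul_smul, smul_smul,
        add_add_add_comm]
      congr 1
      · rw [show (1 - (p*x + q*y)) = p*(1-x) + q*(1-y) by linarith]
        exact hAconv.add_smul (by nlinarith) (by nlinarith)
      · exact hBconv.add_smul (by positivity) (by positivity)
    rw [hseteq]
    have hbm := bm_add d hd (hCxn.smul_set) (hCxc.smul p) (hCxconv.smul p)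
      (hCyn.smul_set) (hCyc.smul q) (hCyconv.smul q)
    rw [smul_body_rpow d hd p hp Cx hCxc.measure_lt_top.ne,
      smul_body_rpow d hd q hq Cy hCyc.measure_lt_top.ne] at hbm
    exact hbm
  · exact bm_add d hd hA hAc hAconv hB hBc hBconv
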